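/- Both of the maps (x,y) ↦ (y,x) and (x,y) ↦ (x⁻¹,y⁻¹) permute the set S = S(F_q). Moreover, for all i,j,r,s ∈ {0,1} and all (x,y) ∈ S: (x,y) ∈ S_{ij}^{rs} if and only if (y,x) ∈ S_{ji}^{sr}, if and only if (x⁻¹,y⁻¹) ∈ S_{1−i,1−j}^{1−r,1−s}. -/

import Mathlib

open scoped Classical

noncomputable section

/-- The operation of the quasigroup `Q_{a,b}`:
`u*v = u + a(v-u)` if `v-u` is a square, `u*v = u + b(v-u)` otherwise. -/
def qop {F : Type*} [Field F] (a b u v : F) : F :=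
  if IsSquare (v - u) then u + a * (v - u) else u + b * (v - u)

/-- The set `Σ(F)` of pairs `(a,b)` with `a ≠ b`, `a,b ∉ {0,1}`, and
`ab` and `(1-a)(1-b)` both squares. -/
def SigSet (F : Type*) [Field F] : Set (F × F) :=
  {p | p.1 ≠ p.2 ∧ p.1 ≠ 0 ∧ p.1 ≠ 1 ∧ p.2 ≠ 0 ∧ p.2 ≠ 1 ∧
    IsSquare (p.1 * p.2) ∧ IsSquare ((1 - p.1) * (1 - p.2))}

/-- `Q_{a,b}` is maximally nonassociative. -/
def MaxNA {F : Type*} [Field F] (a b : F) : Prop :=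
  ∀ u v w : F, qop a b (qop a b u v) w = qop a b u (qop a b v w) → u = v ∧ v = w

/-- `σ(q)`: the number of pairs `(a,b) ∈ Σ` for which `Q_{a,b}` is
maximally nonassociative. -/
def sigmaCount (F : Type*) [Field F] : ℕ :=
  Set.ncard {p : F × F | p ∈ SigSet F ∧ MaxNA p.1 p.2}

/-- The quadratic orthomorphism `ψ_{a,b}`. -/
def psiOrtho {F : Type*} [Field F] (a b u : F) : F :=
  if IsSquare u then a * u else b * u

/-- The Associativity Equation `ψ(ψ(u)-v) = ψ(-v) + ψ(u-v-ψ(-v))`. -/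
def AssocEq {F : Type*} [Field F] (a b u v : F) : Prop :=
  psiOrtho a b (psiOrtho a b u - v) =
    psiOrtho a b (-v) + psiOrtho a b (u - v - psiOrtho a b (-v))

/-- The set `S(F)` of pairs `(x,y)` of squares with `x ≠ y`, `x,y ∉ {0,1}`. -/
def SPairs (F : Type*) [Field F] : Set (F × F) :=
  {p | IsSquare p.1 ∧ IsSquare p.2 ∧ p.1 ≠ p.2 ∧ p.1 ≠ 0 ∧ p.1 ≠ 1 ∧ p.2 ≠ 0 ∧ p.2 ≠ 1}

/-- The map `Ψ : Σ → S`, `(a,b) ↦ (a/b, (1-a)/(1-b))`. -/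
def PsiMap {F : Type*} [Field F] (p : F × F) : F × F :=
  (p.1 / p.2, (1 - p.1) / (1 - p.2))

/-- The set `E(a,b)` of nonzero solutions of the Associativity Equation. -/
def ESet {F : Type*} [Field F] (a b : F) : Set (F × F) :=
  {p | p ≠ (0, 0) ∧ AssocEq a b p.1 p.2}

/-- The set `E_{ij}^{rs}(a,b)`. -/
def ESub {F : Type*} [Field F] (a b : F) (i j r s : Fin 2) : Set (F × F) :=
  {p | p ∈ ESet a b ∧ (IsSquare p.1 ↔ i = 0) ∧ (IsSquare (-p.2) ↔ j = 0) ∧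
    (IsSquare (psiOrtho a b p.1 - p.2) ↔ r = 0) ∧
    (IsSquare (p.1 - p.2 - psiOrtho a b (-p.2)) ↔ s = 0)}

/-- The set `Σ_{ij}^{rs} = {(a,b) ∈ Σ : E_{ij}^{rs}(a,b) ≠ ∅}`. -/
def SigSub (F : Type*) [Field F] (i j r s : Fin 2) : Set (F × F) :=
  {p | p ∈ SigSet F ∧ (ESub p.1 p.2 i j r s).Nonempty}

/-- The set `S_{ij}^{rs} = Ψ(Σ_{ij}^{rs})`. -/
def SSub (F : Type*) [Field F] (i j r s : Fin 2) : Set (F × F) :=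
  PsiMap '' (SigSub F i j r s)

section AuxLemmas

variable {F : Type*} [Field F] [Fintype F]

lemma sqMul {x y : F} (hx : x ≠ 0) (hy : y ≠ 0) :
    IsSquare (x * y) ↔ (IsSquare x ↔ IsSquare y) := by
  have hq := map_mul (quadraticChar F) x y
  have h3 := quadraticChar_one_iff_isSquare (mul_ne_zero hx hy)
  rcases quadraticChar_dichotomy hx with e1 | e1 <;>
  rcases quadraticChar_dichotomy hy with e2 | e2 <;>
  have h1 := (quadraticChar_one_iff_isSquare hx).symm.trans (by rw [e1]) <;>
  have h2 := (quadraticChar_one_iff_isSquare hy).symm.trans (by rw [e2]) <;>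
  rw [e1, e2] at hq <;> rw [hq] at h3 <;> norm_num at h1 h2 h3 <;> tauto

lemma psi_zero (a b : F) : psiOrtho a b 0 = 0 := by simp [psiOrtho]

lemma psi_ne_zero {a b z : F} (ha : a ≠ 0) (hb : b ≠ 0) (hz : z ≠ 0) :
    psiOrtho a b z ≠ 0 := by
  unfold psiOrtho; split
  · exact mul_ne_zero ha hz
  · exact mul_ne_zero hb hz

lemma psi_eq_zero {a b z : F} (ha : a ≠ 0) (hb : b ≠ 0) (h : psiOrtho a b z = 0) : z = 0 := by
  by_contra hz; exact psi_ne_zero ha hb hz h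

lemma psi_sq {a b z : F} (hsq : IsSquare (a * b)) (ha : a ≠ 0) (hb : b ≠ 0) (hz : z ≠ 0) :
    IsSquare (psiOrtho a b z) ↔ (IsSquare a ↔ IsSquare z) := by
  have hSab : IsSquare a ↔ IsSquare b := (sqMul ha hb).mp hsq
  unfold psiOrtho; split
  · exact sqMul ha hz
  · rw [sqMul hb hz]; tauto

lemma psi_inj {a b : F} (hsq : IsSquare (a * b)) (ha : a ≠ 0) (hb : b ≠ 0) {x y : F}
    (h : psiOrtho a b x = psiOrtho a b y) : x = y := by
  by_cases hx : x = 0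
  · subst hx; rw [psi_zero] at h; exact (psi_eq_zero ha hb h.symm).symm
  by_cases hy : y = 0
  · subst hy; rw [psi_zero] at h; exact psi_eq_zero ha hb h
  have hxy : IsSquare x ↔ IsSquare y := by
    have h1 := psi_sq hsq ha hb hx
    have h2 := psi_sq hsq ha hb hy
    rw [h] at h1; tauto
  unfold psiOrtho at h
  by_cases hx' : IsSquare x
  · rw [if_pos hx', if_pos (hxy.mp hx')] at h; exact mul_left_cancel₀ ha h
  · rw [if_neg hx', if_neg (fun hh => hx' (hxy.mpr hh))] at h; exact mul_left_cancel₀ hb h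

lemma psi_fix {a b z : F} (ha1 : a ≠ 1) (hb1 : b ≠ 1) (h : psiOrtho a b z = z) : z = 0 := by
  unfold psiOrtho at h; split at h
  · rcases mul_eq_zero.mp (show (a - 1) * z = 0 by linear_combination h) with h' | h'
    · exact absurd (by linear_combination h') ha1
    · exact h'
  · rcases mul_eq_zero.mp (show (b - 1) * z = 0 by linear_combination h) with h' | h'
    · exact absurd (by linear_combination h') hb1
    · exact h'

lemma psi_compl (a b z : F) : psiOrtho (1 - a) (1 - b) z = z - psiOrtho a b z := by
  unfold psiOrtho; split <;> ring

lemma psi_coef {a b : F} (hab : a ≠ b) (z : F) :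
    ∃ δ : F, (δ = a ∨ δ = b) ∧ psiOrtho a b z = δ * z ∧ ((δ = a) ↔ IsSquare z) := by
  by_cases hz : IsSquare z
  · exact ⟨a, Or.inl rfl, by simp [psiOrtho, hz], by tauto⟩
  · exact ⟨b, Or.inr rfl, by simp [psiOrtho, hz], ⟨fun h => absurd h.symm hab, fun h => absurd h hz⟩⟩

lemma psi_swap' {a b c : F} (hc : ¬ IsSquare c) (w : F) :
    psiOrtho b a (c⁻¹ * w) = c⁻¹ * psiOrtho a b w := by
  have hc0 : c ≠ 0 := fun h => hc (h ▸ IsSquare.zero)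
  by_cases hw : w = 0
  · subst hw; simp [psiOrtho]
  · have hcw : IsSquare (c⁻¹ * w) ↔ ¬ IsSquare w := by
      rw [sqMul (inv_ne_zero hc0) hw]
      have : ¬ IsSquare (c⁻¹ : F) := fun h => hc (isSquare_inv.mp h)
      tauto
    unfold psiOrtho
    by_cases hws : IsSquare w
    · rw [if_pos hws, if_neg (fun h => (hcw.mp h) hws)]; ring
    · rw [if_neg hws, if_pos (hcw.mpr hws)]; ring

set_option maxHeartbeats 1000000 in
lemma E_props {a b : F} (hS : (a, b) ∈ SigSet F) {u v : F} (hE : (u, v) ∈ ESet a b) :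
    u ≠ 0 ∧ v ≠ 0 ∧ psiOrtho a b u - v ≠ 0 ∧ u - v - psiOrtho a b (-v) ≠ 0 := by
  obtain ⟨hab, ha0, ha1, hb0, hb1, hsq, hsq1⟩ := hS
  obtain ⟨hne, hAE⟩ := hE
  simp only at hab ha0 ha1 hb0 hb1 hsq hsq1 hAE
  unfold AssocEq at hAE
  have hv : v ≠ 0 := by
    intro h; subst h
    rw [neg_zero, psi_zero, sub_zero, sub_zero, sub_zero, zero_add] at hAE
    have h1 := psi_fix ha1 hb1 (psi_inj hsq ha0 hb0 hAE)
    exact hne (by rw [h1])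
  have hu : u ≠ 0 := by
    intro h; subst h
    rw [psi_zero, zero_sub] at hAE
    have h1 : psiOrtho a b (-v - psiOrtho a b (-v)) = 0 := by linear_combination -hAE
    have h2 : psiOrtho a b (-v) = -v := by linear_combination -(psi_eq_zero ha0 hb0 h1)
    have h3 := psi_fix ha1 hb1 h2
    exact hv (by linear_combination -h3)
  have ht : u - v - psiOrtho a b (-v) ≠ 0 := by
    intro h
    rw [h, psi_zero, add_zero] at hAE
    have h1 := psi_inj hsq ha0 hb0 hAE
    exact hu (psi_eq_zero ha0 hb0 (by linear_combination h1))
  refine ⟨hu, hv, ?_, ht⟩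
  intro h
  -- degenerate case: psi u = v; derive a contradiction
  rw [h, psi_zero] at hAE
  obtain ⟨α, hαab, hαe, hαs⟩ := psi_coef hab u
  obtain ⟨β, hβab, hβe, hβs⟩ := psi_coef hab (-v)
  obtain ⟨γ, hγab, hγe, hγs⟩ := psi_coef hab (u - v - psiOrtho a b (-v))
  have hSab : IsSquare a ↔ IsSquare b := (sqMul ha0 hb0).mp hsq
  have hα0 : α ≠ 0 := by rcases hαab with h' | h' <;> rw [h'] <;> assumption
  have hβ0 : β ≠ 0 := by rcases hβab with h' | h' <;> rw [h'] <;> assumption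
  have hγ0 : γ ≠ 0 := by rcases hγab with h' | h' <;> rw [h'] <;> assumption
  have hα1 : α ≠ 1 := by rcases hαab with h' | h' <;> rw [h'] <;> assumption
  have hβ1 : β ≠ 1 := by rcases hβab with h' | h' <;> rw [h'] <;> assumption
  have hαa : IsSquare α ↔ IsSquare a := by
    rcases hαab with h' | h' <;> rw [h']
    exact hSab.symm
  have hβa : IsSquare β ↔ IsSquare a := by
    rcases hβab with h' | h' <;> rw [h']
    exact hSab.symm
  have hγa : IsSquare γ ↔ IsSquare a := by
    rcases hγab with h' | h' <;> rw [h']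
    exact hSab.symm
  set t := u - v - psiOrtho a b (-v) with htdef
  have E1 : α * u = v := by linear_combination -hαe + h
  have E2 : γ * t = β * v := by linear_combination -hγe - hAE - hβe
  have E3 : t = u - v + β * v := by rw [htdef, hβe]; ring
  have hk : α * t = v * (1 - α + α * β) := by linear_combination α * E3 + E1
  have hk0 : (1 - α + α * β) ≠ 0 := by
    intro h0
    exact mul_ne_zero hα0 ht (by rw [hk, h0, mul_zero])
  have hvk : v * (γ * (1 - α + α * β) - α * β) = 0 := by linear_combination α * E2 - γ * hk
  have hγk : γ * (1 - α + α * β) = α * β := by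
    rcases mul_eq_zero.mp hvk with h' | h'
    · exact absurd h' hv
    · linear_combination h'
  have hαγ : α ≠ γ := by
    intro he
    have h0 : α * ((1 - α) * (1 - β)) = 0 := by rw [he] at hγk ⊢; linear_combination hγk
    rcases mul_eq_zero.mp h0 with h' | h'
    · exact hα0 h'
    rcases mul_eq_zero.mp h' with h'' | h''
    · exact hα1 (by linear_combination -h'')
    · exact hβ1 (by linear_combination -h'')
  have hαγab : (1 - a) * (1 - b) = (1 - α) * (1 - γ) := by
    rcases hαab with h1 | h1 <;> rcases hγab with h2 | h2
    · exact absurd (h1.trans h2.symm) hαγ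
    · rw [h1, h2]
    · rw [h1, h2]; ring
    · exact absurd (h1.trans h2.symm) hαγ
  have hkγ : (1 - α) * (1 - γ) * (1 - α + α * β) = (1 - α) ^ 2 := by
    linear_combination (α - 1) * hγk
  have hab1 : (1 - a) * (1 - b) ≠ 0 := by
    intro h'
    rcases mul_eq_zero.mp h' with h'' | h''
    · exact ha1 (by linear_combination -h'')
    · exact hb1 (by linear_combination -h'')
  have hSk : IsSquare (1 - α + α * β) := by
    have h1 : IsSquare ((1 - a) * (1 - b) * (1 - α + α * β)) := by
      rw [hαγab, hkγ]; exact ⟨1 - α, by ring⟩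
    exact ((sqMul hab1 hk0).mp h1).mp hsq1
  have hSγ : IsSquare (γ * (1 - α + α * β)) ↔ IsSquare (α * β) := by rw [hγk]
  rw [sqMul hγ0 hk0, sqMul hα0 hβ0] at hSγ
  have hSa : IsSquare a := hγa.mp ((hSγ.mpr (hαa.trans hβa.symm)).mpr hSk)
  have hSv : IsSquare v ↔ (IsSquare α ↔ IsSquare u) := by rw [← E1]; exact sqMul hα0 hu
  have hSt : IsSquare (α * t) ↔ IsSquare (v * (1 - α + α * β)) := by rw [hk]
  rw [sqMul hα0 ht, sqMul hv hk0] at hSt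
  have hSut : ¬ (IsSquare u ↔ IsSquare t) := by
    intro hh
    apply hαγ
    by_cases hsu : IsSquare u
    · rw [hαs.mpr hsu, hγs.mpr (hh.mp hsu)]
    · rcases hαab with h1 | h1
      · exact absurd (hαs.mp h1) hsu
      rcases hγab with h2 | h2
      · exact absurd (hγs.mp h2) (fun hst => hsu (hh.mpr hst))
      rw [h1, h2]
  apply hSut
  have h1 : IsSquare α := hαa.mpr hSa
  constructor
  · intro hsu
    have hv' : IsSquare v := hSv.mpr (iff_of_true h1 hsu)
    exact (hSt.mpr (iff_of_true hv' hSk)).mp h1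
  · intro hst
    have hv' : IsSquare v := (hSt.mp (iff_of_true h1 hst)).mpr hSk
    exact (hSv.mp hv').mp h1

end AuxLemmas

section MainLemmas

variable {F : Type*} [Field F] [Fintype F]

lemma sigma_compl {a b : F} {i j r s : Fin 2} (h : (a, b) ∈ SigSub F i j r s) :
    (1 - a, 1 - b) ∈ SigSub F j i s r := by
  obtain ⟨⟨hab, ha0, ha1, hb0, hb1, hsq, hsq1⟩, ⟨u, v⟩, ⟨hne, hAE⟩, hi, hj, hr, hs⟩ := h
  simp only at hab ha0 ha1 hb0 hb1 hsq hsq1 hne hAE hi hj hr hs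
  refine ⟨⟨fun h' => hab (by linear_combination -h'), fun h' => ha1 (by linear_combination -h'),
      fun h' => ha0 (by linear_combination -h'), fun h' => hb1 (by linear_combination -h'),
      fun h' => hb0 (by linear_combination -h'), hsq1, ?_⟩,
    (-v, -u), ⟨⟨?_, ?_⟩, ?_, ?_, ?_, ?_⟩⟩
  · show IsSquare ((1 - (1 - a)) * (1 - (1 - b)))
    rw [show (1 - (1 - a)) * (1 - (1 - b)) = a * b by ring]; exact hsq
  · intro h'
    rw [Prod.mk.injEq, neg_eq_zero, neg_eq_zero] at h'
    exact hne (by rw [Prod.mk.injEq]; exact ⟨h'.2, h'.1⟩)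
  · show AssocEq (1 - a) (1 - b) (-v) (-u)
    unfold AssocEq at hAE ⊢
    simp only [psi_compl, neg_neg]
    rw [show -v - psiOrtho a b (-v) - -u = u - v - psiOrtho a b (-v) by ring]
    rw [show -v - -u - (u - psiOrtho a b u) = psiOrtho a b u - v by ring]
    linear_combination hAE
  · exact hj
  · show IsSquare (-(-u)) ↔ i = 0
    rw [neg_neg]; exact hi
  · show IsSquare (psiOrtho (1 - a) (1 - b) (-v) - -u) ↔ s = 0
    rw [psi_compl, show -v - psiOrtho a b (-v) - -u = u - v - psiOrtho a b (-v) by ring]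
    exact hs
  · show IsSquare (-v - -u - psiOrtho (1 - a) (1 - b) (-(-u))) ↔ r = 0
    rw [psi_compl, neg_neg,
      show -v - -u - (u - psiOrtho a b u) = psiOrtho a b u - v by ring]
    exact hr

lemma sigma_swap {a b c : F} (hc : ¬ IsSquare c) {i j r s : Fin 2}
    (h : (a, b) ∈ SigSub F i j r s) :
    (b, a) ∈ SigSub F (1 - i) (1 - j) (1 - r) (1 - s) := by
  have hc0 : c ≠ 0 := fun h' => hc (h' ▸ IsSquare.zero)
  have hfin : ∀ k : Fin 2, (1 - k = 0) ↔ ¬ k = 0 := by decide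
  obtain ⟨hSig, ⟨u, v⟩, hEmem, hi, hj, hr, hs⟩ := h
  obtain ⟨hu, hv, hr0, hs0⟩ := E_props hSig hEmem
  obtain ⟨hab, ha0, ha1, hb0, hb1, hsq, hsq1⟩ := hSig
  obtain ⟨hne, hAE⟩ := hEmem
  simp only at hab ha0 ha1 hb0 hb1 hsq hsq1 hne hAE hi hj hr hs hu hv hr0 hs0
  have hflip : ∀ z : F, z ≠ 0 → (IsSquare (c⁻¹ * z) ↔ ¬ IsSquare z) := by
    intro z hz
    rw [sqMul (inv_ne_zero hc0) hz]
    have hci : ¬ IsSquare (c⁻¹ : F) := fun h' => hc (isSquare_inv.mp h')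
    tauto
  refine ⟨⟨hab.symm, hb0, hb1, ha0, ha1, by rw [mul_comm]; exact hsq,
      by rw [mul_comm]; exact hsq1⟩,
    (c⁻¹ * u, c⁻¹ * v), ⟨⟨?_, ?_⟩, ?_, ?_, ?_, ?_⟩⟩
  · intro h'
    rw [Prod.mk.injEq] at h'
    exact hu (by
      rcases mul_eq_zero.mp h'.1 with h'' | h''
      · exact absurd h'' (inv_ne_zero hc0)
      · exact h'')
  · show AssocEq b a (c⁻¹ * u) (c⁻¹ * v)
    unfold AssocEq
    rw [psi_swap' hc u,
      show c⁻¹ * psiOrtho a b u - c⁻¹ * v = c⁻¹ * (psiOrtho a b u - v) by ring,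
      psi_swap' hc (psiOrtho a b u - v),
      show -(c⁻¹ * v) = c⁻¹ * (-v) by ring,
      psi_swap' hc (-v),
      show c⁻¹ * u - c⁻¹ * v - c⁻¹ * psiOrtho a b (-v)
        = c⁻¹ * (u - v - psiOrtho a b (-v)) by ring,
      psi_swap' hc (u - v - psiOrtho a b (-v))]
    unfold AssocEq at hAE
    linear_combination c⁻¹ * hAE
  · show IsSquare (c⁻¹ * u) ↔ 1 - i = 0
    rw [hflip u hu, hfin i]; exact not_congr hi
  · show IsSquare (-(c⁻¹ * v)) ↔ 1 - j = 0
    rw [show -(c⁻¹ * v) = c⁻¹ * (-v) by ring, hflip (-v) (neg_ne_zero.mpr hv), hfin j]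
    exact not_congr hj
  · show IsSquare (psiOrtho b a (c⁻¹ * u) - c⁻¹ * v) ↔ 1 - r = 0
    rw [psi_swap' hc u,
      show c⁻¹ * psiOrtho a b u - c⁻¹ * v = c⁻¹ * (psiOrtho a b u - v) by ring,
      hflip _ hr0, hfin r]
    exact not_congr hr
  · show IsSquare (c⁻¹ * u - c⁻¹ * v - psiOrtho b a (-(c⁻¹ * v))) ↔ 1 - s = 0
    rw [show -(c⁻¹ * v) = c⁻¹ * (-v) by ring, psi_swap' hc (-v),
      show c⁻¹ * u - c⁻¹ * v - c⁻¹ * psiOrtho a b (-v)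
        = c⁻¹ * (u - v - psiOrtho a b (-v)) by ring,
      hflip _ hs0, hfin s]
    exact not_congr hs

lemma ssub_swap {i j r s : Fin 2} {x y : F} (h : (x, y) ∈ SSub F i j r s) :
    (y, x) ∈ SSub F j i s r := by
  obtain ⟨⟨a, b⟩, hp, hΨ⟩ := h
  refine ⟨(1 - a, 1 - b), sigma_compl hp, ?_⟩
  unfold PsiMap at hΨ ⊢
  simp only [Prod.mk.injEq] at hΨ ⊢
  refine ⟨hΨ.2, ?_⟩
  rw [show (1 : F) - (1 - a) = a by ring, show (1 : F) - (1 - b) = b by ring]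
  exact hΨ.1

lemma ssub_inv {c : F} (hc : ¬ IsSquare c) {i j r s : Fin 2} {x y : F}
    (h : (x, y) ∈ SSub F i j r s) :
    (x⁻¹, y⁻¹) ∈ SSub F (1 - i) (1 - j) (1 - r) (1 - s) := by
  obtain ⟨⟨a, b⟩, hp, hΨ⟩ := h
  refine ⟨(b, a), sigma_swap hc hp, ?_⟩
  unfold PsiMap at hΨ ⊢
  simp only [Prod.mk.injEq] at hΨ ⊢
  constructor
  · rw [← hΨ.1, inv_div]
  · rw [← hΨ.2, inv_div]

end MainLemmas

/-- Proposition 2.3: `(x,y) ↦ (y,x)` and `(x,y) ↦ (x⁻¹,y⁻¹)` permute `S`, and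
`(x,y) ∈ S_{ij}^{rs}` iff `(y,x) ∈ S_{ji}^{sr}` iff
`(x⁻¹,y⁻¹) ∈ S_{1-i,1-j}^{1-r,1-s}`. -/
theorem ssub_symmetries (F : Type*) [Field F] [Fintype F]
    (hodd : Odd (Fintype.card F)) :
    Set.BijOn (fun p : F × F => (p.2, p.1)) (SPairs F) (SPairs F) ∧
    Set.BijOn (fun p : F × F => (p.1⁻¹, p.2⁻¹)) (SPairs F) (SPairs F) ∧
    ∀ (i j r s : Fin 2) (x y : F), (x, y) ∈ SPairs F →
      (((x, y) ∈ SSub F i j r s ↔ (y, x) ∈ SSub F j i s r) ∧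
       ((x, y) ∈ SSub F i j r s ↔
          (x⁻¹, y⁻¹) ∈ SSub F (1 - i) (1 - j) (1 - r) (1 - s))) := by
  have hchar : ringChar F ≠ 2 := by
    intro h2
    have h3 := FiniteField.even_card_iff_char_two.mp h2
    have h4 := Nat.odd_iff.mp hodd
    omega
  obtain ⟨c, hc⟩ := FiniteField.exists_nonsquare hchar
  have hswapMaps : Set.MapsTo (fun p : F × F => (p.2, p.1)) (SPairs F) (SPairs F) := by
    rintro ⟨x, y⟩ ⟨h1, h2, h3, h4, h5, h6, h7⟩
    exact ⟨h2, h1, Ne.symm h3, h6, h7, h4, h5⟩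
  have hinvMaps : Set.MapsTo (fun p : F × F => (p.1⁻¹, p.2⁻¹)) (SPairs F) (SPairs F) := by
    rintro ⟨x, y⟩ ⟨h1, h2, h3, h4, h5, h6, h7⟩
    refine ⟨isSquare_inv.mpr h1, isSquare_inv.mpr h2, fun h' => h3 (inv_injective h'),
      inv_ne_zero h4, fun h' => h5 (inv_eq_one.mp h'), inv_ne_zero h6,
      fun h' => h7 (inv_eq_one.mp h')⟩
  refine ⟨?_, ?_, ?_⟩
  · exact Set.InvOn.bijOn ⟨fun p _ => rfl, fun p _ => rfl⟩ hswapMaps hswapMaps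
  · refine Set.InvOn.bijOn ⟨fun p _ => ?_, fun p _ => ?_⟩ hinvMaps hinvMaps <;>
      simp [inv_inv]
  · intro i j r s x y _
    have hfin : ∀ k : Fin 2, 1 - (1 - k) = k := by decide
    constructor
    · exact ⟨fun h => ssub_swap h, fun h => ssub_swap h⟩
    · constructor
      · exact fun h => ssub_inv hc h
      · intro h
        have h2 := ssub_inv hc h
        rw [inv_inv, inv_inv, hfin i, hfin j, hfin r, hfin s] at h2
        exact h2
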